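/- Let X be a metric space and μ a Borel measure on X with volume growth of order n with constant C, i.e. μ(B(x,r)) ≤ C·rⁿ for every x ∈ X and every r > 0, where n > 0 is a fixed real number. Let q > 0, let ε > 0, and let p₁, …, p_m ∈ X and r₁, …, r_m ∈ (0,1) satisfy Σ_{i=1}^m r_i^{n−q} < ε. Suppose g : X → [0,∞) is a Borel measurable function such that for every x ∈ X, g(x) ≤ sup { 2/r_i : 1 ≤ i ≤ m and x ∈ B(p_i, 2r_i) \ B(p_i, r_i) } (where the supremum of the empty set is 0; in particular g(x) = 0 if x lies in none of the annuli). Then ∫_X g^q dμ ≤ 2^{n+q}·C·ε. -/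

import Mathlib

open MeasureTheory Metric

/-- Lemma 3.1 of the paper (measure-theoretic content): if `μ` has volume growth of
order `n` with constant `C`, and `g` is bounded pointwise by the supremum of `2 / rᵢ`
over the annuli `B(pᵢ, 2rᵢ) \ B(pᵢ, rᵢ)` containing the point, where `∑ rᵢ^(n-q) < ε`,
then `∫ g^q dμ ≤ 2^(n+q) C ε`. -/
theorem stmt_1 {X : Type*} [MetricSpace X] [MeasurableSpace X] [BorelSpace X]
    (μ : Measure X) (n C : ℝ) (hn : 0 < n)
    (hvol : ∀ (x : X) (r : ℝ), 0 < r → μ (ball x r) ≤ ENNReal.ofReal (C * r ^ n))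
    (q : ℝ) (hq : 0 < q) (ε : ℝ) (hε : 0 < ε)
    (m : ℕ) (p : Fin m → X) (r : Fin m → ℝ)
    (hr : ∀ i, r i ∈ Set.Ioo (0 : ℝ) 1)
    (hsum : ∑ i, r i ^ (n - q) < ε)
    (g : X → ℝ) (hg0 : ∀ x, 0 ≤ g x) (hgm : Measurable g)
    (hgle : ∀ x, g x ≤
      ⨆ (i : Fin m) (_ : x ∈ ball (p i) (2 * r i) \ ball (p i) (r i)), 2 / r i) :
    ∫⁻ x, ENNReal.ofReal (g x ^ q) ∂μ ≤ ENNReal.ofReal (2 ^ (n + q) * C * ε) := by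
  rcases isEmpty_or_nonempty X with hX | hX
  · have hμ : μ = 0 := by
      ext s hs
      simp [Set.eq_empty_of_isEmpty s]
    simp [hμ]
  rcases lt_or_ge C 0 with hC | hC
  · obtain ⟨x0⟩ := hX
    have hz : ∀ k : ℕ, μ (ball x0 (k + 1)) = 0 := by
      intro k
      refine le_antisymm ((hvol _ _ (by positivity)).trans_eq ?_) (zero_le)
      rw [ENNReal.ofReal_eq_zero]
      nlinarith [Real.rpow_pos_of_pos (show (0:ℝ) < (k:ℝ) + 1 by positivity) n]
    have h1 : μ Set.univ = 0 := by
      refine le_antisymm ?_ (zero_le)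
      have hcov : Set.univ ⊆ ⋃ k : ℕ, ball x0 ((k : ℝ) + 1) := by
        intro y _
        rcases exists_nat_gt (dist y x0) with ⟨k, hk⟩
        exact Set.mem_iUnion.mpr ⟨k, by simp [mem_ball]; linarith⟩
      calc μ Set.univ ≤ μ (⋃ k : ℕ, ball x0 ((k : ℝ) + 1)) := measure_mono hcov
        _ ≤ ∑' k : ℕ, μ (ball x0 ((k : ℝ) + 1)) := measure_iUnion_le _
        _ = 0 := by simp [hz]
    have hμ : μ = 0 := Measure.measure_univ_eq_zero.mp h1
    simp [hμ]
  -- main case C ≥ 0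
  have key : ∀ x, ENNReal.ofReal (g x ^ q) ≤
      ∑ i, (ball (p i) (2 * r i)).indicator (fun _ => ENNReal.ofReal ((2 / r i) ^ q)) x := by
    intro x
    have hcases : g x = 0 ∨ ∃ j, x ∈ ball (p j) (2 * r j) ∧ g x ≤ 2 / r j := by
      rcases isEmpty_or_nonempty (Fin m) with h | h
      · left
        refine le_antisymm ?_ (hg0 x)
        have := hgle x
        rwa [Real.iSup_of_isEmpty] at this
      · obtain ⟨j, hj⟩ := Finite.exists_max
          (fun i => ⨆ (_ : x ∈ ball (p i) (2 * r i) \ ball (p i) (r i)), 2 / r i)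
        have hle : g x ≤ ⨆ (_ : x ∈ ball (p j) (2 * r j) \ ball (p j) (r j)), 2 / r j :=
          (hgle x).trans (ciSup_le hj)
        by_cases hx : x ∈ ball (p j) (2 * r j) \ ball (p j) (r j)
        · right
          exact ⟨j, hx.1, by rwa [ciSup_pos hx] at hle⟩
        · left
          refine le_antisymm ?_ (hg0 x)
          haveI : IsEmpty (x ∈ ball (p j) (2 * r j) \ ball (p j) (r j)) := isEmpty_Prop.mpr hx
          rwa [Real.iSup_of_isEmpty] at hle
    rcases hcases with hgx | ⟨j, hmem, hle⟩
    · simp [hgx, Real.zero_rpow hq.ne']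
    · calc ENNReal.ofReal (g x ^ q) ≤ ENNReal.ofReal ((2 / r j) ^ q) :=
            ENNReal.ofReal_le_ofReal (Real.rpow_le_rpow (hg0 x) hle hq.le)
      _ = (ball (p j) (2 * r j)).indicator (fun _ => ENNReal.ofReal ((2 / r j) ^ q)) x :=
            (Set.indicator_of_mem hmem (fun _ => ENNReal.ofReal ((2 / r j) ^ q))).symm
      _ ≤ _ := Finset.single_le_sum (f := fun i => (ball (p i) (2 * r i)).indicator
            (fun _ => ENNReal.ofReal ((2 / r i) ^ q)) x) (fun i _ => zero_le) (Finset.mem_univ j)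
  calc ∫⁻ x, ENNReal.ofReal (g x ^ q) ∂μ
      ≤ ∫⁻ x, ∑ i, (ball (p i) (2 * r i)).indicator
          (fun _ => ENNReal.ofReal ((2 / r i) ^ q)) x ∂μ := lintegral_mono key
    _ = ∑ i, ∫⁻ x, (ball (p i) (2 * r i)).indicator
          (fun _ => ENNReal.ofReal ((2 / r i) ^ q)) x ∂μ :=
        lintegral_finset_sum _ (fun i _ => measurable_const.indicator measurableSet_ball)
    _ = ∑ i, ENNReal.ofReal ((2 / r i) ^ q) * μ (ball (p i) (2 * r i)) := by
        simp [lintegral_indicator_const measurableSet_ball]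
    _ ≤ ∑ i, ENNReal.ofReal (2 ^ (n + q) * C * r i ^ (n - q)) := by
        refine Finset.sum_le_sum fun i _ => ?_
        have hri := (hr i).1
        have h1 : μ (ball (p i) (2 * r i)) ≤ ENNReal.ofReal (C * (2 * r i) ^ n) :=
          hvol _ _ (by positivity)
        calc ENNReal.ofReal ((2 / r i) ^ q) * μ (ball (p i) (2 * r i))
            ≤ ENNReal.ofReal ((2 / r i) ^ q) * ENNReal.ofReal (C * (2 * r i) ^ n) :=
              mul_le_mul_right h1 _
          _ = ENNReal.ofReal ((2 / r i) ^ q * (C * (2 * r i) ^ n)) :=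
              (ENNReal.ofReal_mul (Real.rpow_nonneg (by positivity) _)).symm
          _ = ENNReal.ofReal (2 ^ (n + q) * C * r i ^ (n - q)) := by
              congr 1
              rw [Real.div_rpow (by norm_num) hri.le, Real.mul_rpow (by norm_num) hri.le,
                Real.rpow_add (by norm_num : (0:ℝ) < 2), Real.rpow_sub hri]
              have hrq : r i ^ q ≠ 0 := (Real.rpow_pos_of_pos hri q).ne'
              field_simp
    _ = ENNReal.ofReal (∑ i, 2 ^ (n + q) * C * r i ^ (n - q)) := by
        rw [ENNReal.ofReal_sum_of_nonneg]
        intro i _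
        have := Real.rpow_nonneg (hr i).1.le (n - q)
        positivity
    _ ≤ ENNReal.ofReal (2 ^ (n + q) * C * ε) := by
        apply ENNReal.ofReal_le_ofReal
        rw [← Finset.mul_sum]
        exact mul_le_mul_of_nonneg_left hsum.le (by positivity)
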